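/- arXiv:2111.11095 — 3 statements merged into one kernel-verified Lean document; each statement's English description precedes it below -/
import Mathlib

section
/- Let v : [0,∞) → ℝ be a measurable function with v(t) ≥ v_min > 0 for all t. For a start time u ≥ 0 and distance d ≥ 0, define τ(u, d) = inf{t ≥ 0 : ∫_u^{u+t} v(s) ds ≥ d}. Then for any d ≥ 0, if u₁ ≤ u₂, we have u₁ + τ(u₁, d) ≤ u₂ + τ(u₂, d) (the FIFO / consistency property: the arrival time is a monotone function of the departure time). -/
open MeasureTheory intervalIntegral

/-- FIFO property: the arrival time `u + τ(u,d)` is monotone in the departure time `u`. -/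
theorem stmt0 (v : ℝ → ℝ) (vmin : ℝ) (hvmin : 0 < vmin)
    (hmeas : Measurable v)
    (hlb : ∀ t, 0 ≤ t → vmin ≤ v t)
    (hint : ∀ a b : ℝ, IntervalIntegrable v MeasureTheory.volume a b)
    (τ : ℝ → ℝ → ℝ)
    (hτ : ∀ u d, τ u d = sInf {t : ℝ | 0 ≤ t ∧ d ≤ ∫ s in u..(u + t), v s})
    (d : ℝ) (hd : 0 ≤ d) (u₁ u₂ : ℝ) (hu₁ : 0 ≤ u₁) (h12 : u₁ ≤ u₂) :
    u₁ + τ u₁ d ≤ u₂ + τ u₂ d := by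
  have hcont : ∀ u : ℝ, Continuous fun t => ∫ s in u..(u + t), v s := by
    intro u
    exact (intervalIntegral.continuous_primitive hint u).comp
      (continuous_const.add continuous_id)
  have hbdd : ∀ u : ℝ,
      BddBelow {t : ℝ | 0 ≤ t ∧ d ≤ ∫ s in u..(u + t), v s} :=
    fun u => ⟨0, fun t ht => ht.1⟩
  have hne : ∀ u : ℝ, 0 ≤ u →
      (d / vmin) ∈ {t : ℝ | 0 ≤ t ∧ d ≤ ∫ s in u..(u + t), v s} := by
    intro u hu
    have ht0 : 0 ≤ d / vmin := div_nonneg hd hvmin.le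
    refine ⟨ht0, ?_⟩
    have hle : u ≤ u + d / vmin := by linarith
    have h1 : ∫ _ in u..(u + d / vmin), vmin ≤ ∫ s in u..(u + d / vmin), v s := by
      apply intervalIntegral.integral_mono_on hle intervalIntegrable_const (hint _ _)
      intro x hx
      exact hlb x (le_trans hu hx.1)
    rw [intervalIntegral.integral_const, smul_eq_mul] at h1
    have : (u + d / vmin - u) * vmin = d := by
      field_simp
      ring
    linarith
  have key : ∀ u, 0 ≤ u → 0 ≤ τ u d ∧ d ≤ ∫ s in u..(u + τ u d), v s := by
    intro u hu
    have hclosed : IsClosed {t : ℝ | 0 ≤ t ∧ d ≤ ∫ s in u..(u + t), v s} :=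
      (isClosed_le continuous_const continuous_id).inter
        (isClosed_le continuous_const (hcont u))
    have := hclosed.csInf_mem ⟨_, hne u hu⟩ (hbdd u)
    rw [hτ]
    exact this
  have hu₂ : 0 ≤ u₂ := hu₁.trans h12
  obtain ⟨h2a, h2b⟩ := key u₂ hu₂
  set t := u₂ - u₁ + τ u₂ d with ht
  have hmem : t ∈ {s : ℝ | 0 ≤ s ∧ d ≤ ∫ x in u₁..(u₁ + s), v x} := by
    refine ⟨by linarith, ?_⟩
    have hsplit : (∫ s in u₁..u₂, v s) + ∫ s in u₂..(u₂ + τ u₂ d), v s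
        = ∫ s in u₁..(u₂ + τ u₂ d), v s :=
      intervalIntegral.integral_add_adjacent_intervals (hint _ _) (hint _ _)
    have hnn : 0 ≤ ∫ s in u₁..u₂, v s := by
      apply intervalIntegral.integral_nonneg h12
      intro x hx
      exact le_trans hvmin.le (hlb x (hu₁.trans hx.1))
    have heq : u₁ + t = u₂ + τ u₂ d := by ring
    rw [heq, ← hsplit]
    linarith
  have hle : τ u₁ d ≤ t := by
    rw [hτ]
    exact csInf_le (hbdd u₁) hmem
  linarith
end

section
/- Let Q be an n × n generator matrix that is block-decomposable with respect to a partition of the index set as a product 𝓘 = 𝓘₁ × 𝓘₂, in the sense that Q = Q₂ ⊕ Q₁ (Kronecker sum) for generators Q₁ on 𝓘₁ and Q₂ on 𝓘₂. Let V be a diagonal matrix on 𝓘 whose diagonal entries depend only on the 𝓘₁-coordinate: V = I_{𝓘₂} ⊗ V₁ for a positive diagonal matrix V₁ on 𝓘₁. Then for every d ≥ 0, the marginal over the 𝓘₁-coordinate of the stochastic matrix exp(d V⁻¹ Q) depends only on Q₁ and V₁; specifically, Σ_{s₂'} [exp(d V⁻¹ Q)]_{(s₂,s₁),(s₂',s₁')}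 = [exp(d V₁⁻¹ Q₁)]_{s₁,s₁'} for all s₂ ∈ 𝓘₂ and s₁, s₁' ∈ 𝓘₁. -/
open Matrix
open scoped Kronecker

/-- If `A * U = U * B` for a rectangular matrix `U`, then `exp A * U = U * exp B`. -/
lemma exp_intertwine_aux {m n : Type*} [Fintype m] [DecidableEq m] [Fintype n] [DecidableEq n]
    (A : Matrix m m ℝ) (B : Matrix n n ℝ) (U : Matrix m n ℝ) (h : A * U = U * B) :
    NormedSpace.exp A * U = U * NormedSpace.exp B := by
  letI : NormedRing (Matrix m m ℝ) := Matrix.linftyOpNormedRing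
  letI : NormedAlgebra ℝ (Matrix m m ℝ) := Matrix.linftyOpNormedAlgebra
  letI : NormedRing (Matrix n n ℝ) := Matrix.linftyOpNormedRing
  letI : NormedAlgebra ℝ (Matrix n n ℝ) := Matrix.linftyOpNormedAlgebra
  have hpow : ∀ k, A ^ k * U = U * B ^ k := by
    intro k
    induction k with
    | zero => simp
    | succ k ih =>
      rw [pow_succ, pow_succ, Matrix.mul_assoc, h, ← Matrix.mul_assoc, ih, Matrix.mul_assoc]
  let L : Matrix m m ℝ →ₗ[ℝ] Matrix m n ℝ :=
    { toFun := fun X => X * U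
      map_add' := fun X Y => Matrix.add_mul X Y U
      map_smul' := fun c X => Matrix.smul_mul c X U }
  let R : Matrix n n ℝ →ₗ[ℝ] Matrix m n ℝ :=
    { toFun := fun X => U * X
      map_add' := fun X Y => Matrix.mul_add U X Y
      map_smul' := fun c X => Matrix.mul_smul U c X }
  have hLc : Continuous L := L.continuous_of_finiteDimensional
  have hRc : Continuous R := R.continuous_of_finiteDimensional
  have hA : Summable fun k : ℕ => ((Nat.factorial k : ℝ))⁻¹ • A ^ k :=
    NormedSpace.expSeries_summable' (𝕂 := ℝ) A
  have hB : Summable fun k : ℕ => ((Nat.factorial k : ℝ))⁻¹ • B ^ k :=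
    NormedSpace.expSeries_summable' (𝕂 := ℝ) B
  have h1 : NormedSpace.exp A * U = L (∑' k : ℕ, ((Nat.factorial k : ℝ))⁻¹ • A ^ k) := by
    rw [NormedSpace.exp_eq_tsum (𝕂 := ℝ)]; rfl
  have h2 : U * NormedSpace.exp B = R (∑' k : ℕ, ((Nat.factorial k : ℝ))⁻¹ • B ^ k) := by
    rw [NormedSpace.exp_eq_tsum (𝕂 := ℝ)]; rfl
  rw [h1, h2, (hA.hasSum.map L hLc).tsum_eq.symm, (hB.hasSum.map R hRc).tsum_eq.symm]
  congr 1
  funext k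
  simp only [Function.comp_apply, L, R, LinearMap.coe_mk, AddHom.coe_mk]
  rw [Matrix.smul_mul, Matrix.mul_smul, hpow]

/-- Local-correlation reduction: if the generator decomposes as the Kronecker sum
`Q = Q₂ ⊕ Q₁` on `𝓘₂ × 𝓘₁` and the speeds depend only on the `𝓘₁`-coordinate
(`V = I ⊗ V₁`), then the `𝓘₁`-marginal of the stochastic matrix `exp(d V⁻¹ Q)` is
`exp(d V₁⁻¹ Q₁)`:
`Σ_{s₂'} [exp(d V⁻¹ Q)]_{(s₂,s₁),(s₂',s₁')} = [exp(d V₁⁻¹ Q₁)]_{s₁,s₁'}`. -/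
theorem stmt17 {I₁ I₂ : Type*} [Fintype I₁] [DecidableEq I₁] [Fintype I₂] [DecidableEq I₂]
    (Q₁ : Matrix I₁ I₁ ℝ) (Q₂ : Matrix I₂ I₂ ℝ)
    (h1off : ∀ i j, i ≠ j → 0 ≤ Q₁ i j) (h1row : ∀ i, ∑ j, Q₁ i j = 0)
    (h2off : ∀ i j, i ≠ j → 0 ≤ Q₂ i j) (h2row : ∀ i, ∑ j, Q₂ i j = 0)
    (v₁ : I₁ → ℝ) (hv₁ : ∀ i, 0 < v₁ i)
    (d : ℝ) (hd : 0 ≤ d) (s₂ : I₂) (s₁ s₁' : I₁) :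
    ∑ s₂' : I₂,
        NormedSpace.exp (d • ((Matrix.diagonal fun p : I₂ × I₁ => v₁ p.2)⁻¹ *
            (Q₂ ⊗ₖ (1 : Matrix I₁ I₁ ℝ) + (1 : Matrix I₂ I₂ ℝ) ⊗ₖ Q₁))) (s₂, s₁) (s₂', s₁')
      = NormedSpace.exp (d • ((Matrix.diagonal v₁)⁻¹ * Q₁)) s₁ s₁' := by
  set A : Matrix (I₂ × I₁) (I₂ × I₁) ℝ :=
    d • ((Matrix.diagonal fun p : I₂ × I₁ => v₁ p.2)⁻¹ *
      (Q₂ ⊗ₖ (1 : Matrix I₁ I₁ ℝ) + (1 : Matrix I₂ I₂ ℝ) ⊗ₖ Q₁)) with hA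
  set B : Matrix I₁ I₁ ℝ := d • ((Matrix.diagonal v₁)⁻¹ * Q₁) with hB
  set U : Matrix (I₂ × I₁) I₁ ℝ :=
    Matrix.of (fun p j => if p.2 = j then (1 : ℝ) else 0) with hU
  have hdiag2 : (Matrix.diagonal fun p : I₂ × I₁ => v₁ p.2)⁻¹ =
      Matrix.diagonal fun p : I₂ × I₁ => (v₁ p.2)⁻¹ := by
    apply Matrix.inv_eq_right_inv
    rw [Matrix.diagonal_mul_diagonal]
    convert Matrix.diagonal_one
    exact mul_inv_cancel₀ (hv₁ _).ne'
  have hdiag1 : (Matrix.diagonal v₁)⁻¹ = Matrix.diagonal fun i => (v₁ i)⁻¹ := by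
    apply Matrix.inv_eq_right_inv
    rw [Matrix.diagonal_mul_diagonal]
    convert Matrix.diagonal_one
    exact mul_inv_cancel₀ (hv₁ _).ne'
  have hKU : (Q₂ ⊗ₖ (1 : Matrix I₁ I₁ ℝ) + (1 : Matrix I₂ I₂ ℝ) ⊗ₖ Q₁) * U = U * Q₁ := by
    ext ⟨t₂, t₁⟩ j
    simp only [Matrix.mul_apply, Matrix.add_apply, Matrix.kroneckerMap_apply, Matrix.one_apply,
      hU, Matrix.of_apply, Fintype.sum_prod_type]
    simp only [mul_ite, mul_one, mul_zero, ite_mul, zero_mul, one_mul, add_mul]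
    simp only [Finset.sum_add_distrib, Finset.sum_ite_eq, Finset.sum_ite_eq', Finset.mem_univ,
      if_true]
    rcases eq_or_ne t₁ j with rfl | h
    · simp [h2row]
    · simp [h]
  have hDU : (Matrix.diagonal fun p : I₂ × I₁ => (v₁ p.2)⁻¹) * U =
      U * Matrix.diagonal fun i => (v₁ i)⁻¹ := by
    ext ⟨t₂, t₁⟩ j
    simp [Matrix.mul_apply, Matrix.diagonal_apply, Fintype.sum_prod_type, Finset.sum_ite_eq,
      Finset.sum_ite_eq', mul_ite, ite_mul, eq_comm, hU]
    rcases eq_or_ne t₁ j with rfl | h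
    · simp [ite_and]
    · simp [h]
  have hcomm : A * U = U * B := by
    rw [hA, hB, Matrix.smul_mul, Matrix.mul_smul]
    congr 1
    rw [hdiag2, hdiag1, Matrix.mul_assoc, hKU, ← Matrix.mul_assoc, hDU, Matrix.mul_assoc]
  have key := exp_intertwine_aux A B U hcomm
  have h1 : (NormedSpace.exp A * U) (s₂, s₁) s₁' =
      ∑ s₂' : I₂, NormedSpace.exp A (s₂, s₁) (s₂', s₁') := by
    rw [Matrix.mul_apply, Fintype.sum_prod_type]
    simp [hU, Finset.sum_ite_eq']
  have h2 : (U * NormedSpace.exp B) (s₂, s₁) s₁' = NormedSpace.exp B s₁ s₁' := by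
    rw [Matrix.mul_apply]
    simp [hU, Finset.sum_ite_eq]
  rw [← h1, key, h2]
end

section
/- Let v : [0,∞) → ℝ be measurable with 0 < v_min ≤ v(t) ≤ v_max, and define the arrival-time function a(u) = u + τ(u, d) where τ(u, d) = inf{t ≥ 0 : ∫_u^{u+t} v(s) ds ≥ d} for a fixed distance d > 0. Then a is Lipschitz continuous with Lipschitz constant at most max(1, v_max / v_min): |a(u₁) − a(u₂)| ≤ (v_max / v_min) |u₁ − u₂| for all u₁, u₂ ≥ 0. -/
open MeasureTheory intervalIntegral

section aux

variable (v : ℝ → ℝ) (vmin vmax : ℝ)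

/-- Lower and upper bounds on interval integrals of `v`. -/
lemma integ_lb (hvmin : 0 < vmin)
    (hlb : ∀ t, 0 ≤ t → vmin ≤ v t)
    (hint : ∀ a b : ℝ, IntervalIntegrable v MeasureTheory.volume a b)
    {x y : ℝ} (hx : 0 ≤ x) (hxy : x ≤ y) :
    vmin * (y - x) ≤ ∫ s in x..y, v s := by
  have h := intervalIntegral.integral_mono_on (μ := volume) hxy
    (_root_.intervalIntegrable_const (c := vmin)) (hint x y)
    (fun t ht => hlb t (le_trans hx ht.1))
  simpa [intervalIntegral.integral_const, smul_eq_mul, mul_comm] using h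

lemma integ_ub
    (hub : ∀ t, 0 ≤ t → v t ≤ vmax)
    (hint : ∀ a b : ℝ, IntervalIntegrable v MeasureTheory.volume a b)
    {x y : ℝ} (hx : 0 ≤ x) (hxy : x ≤ y) :
    (∫ s in x..y, v s) ≤ vmax * (y - x) := by
  have h := intervalIntegral.integral_mono_on (μ := volume) hxy
    (hint x y) (_root_.intervalIntegrable_const (c := vmax))
    (fun t ht => hub t (le_trans hx ht.1))
  simpa [intervalIntegral.integral_const, smul_eq_mul, mul_comm] using h

end aux

/-- Lipschitz continuity of the arrival time `a(u) = u + τ(u,d)` in the departure time: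
`|a(u₁) − a(u₂)| ≤ (vmax/vmin) |u₁ − u₂|`. -/
theorem stmt18 (v : ℝ → ℝ) (vmin vmax : ℝ) (hvmin : 0 < vmin)
    (hmeas : Measurable v)
    (hlb : ∀ t, 0 ≤ t → vmin ≤ v t) (hub : ∀ t, 0 ≤ t → v t ≤ vmax)
    (hint : ∀ a b : ℝ, IntervalIntegrable v MeasureTheory.volume a b)
    (τ : ℝ → ℝ → ℝ)
    (hτ : ∀ u d, τ u d = sInf {t : ℝ | 0 ≤ t ∧ d ≤ ∫ s in u..(u + t), v s})
    (d : ℝ) (hd : 0 < d)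
    (a : ℝ → ℝ) (ha : ∀ u, a u = u + τ u d)
    (u₁ u₂ : ℝ) (hu₁ : 0 ≤ u₁) (hu₂ : 0 ≤ u₂) :
    |a u₁ - a u₂| ≤ (vmax / vmin) * |u₁ - u₂| := by
  have hvm : vmin ≤ vmax := le_trans (hlb 0 le_rfl) (hub 0 le_rfl)
  have hvmax : 0 < vmax := lt_of_lt_of_le hvmin hvm
  have hM1 : (1 : ℝ) ≤ vmax / vmin := (one_le_div hvmin).2 hvm
  set M := vmax / vmin with hM
  -- basic facts about the set defining τ
  have hτmem : ∀ u : ℝ, 0 ≤ u → (0 ≤ τ u d ∧ d ≤ ∫ s in u..(u + τ u d), v s) := by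
    intro u hu
    set S : Set ℝ := {t : ℝ | 0 ≤ t ∧ d ≤ ∫ s in u..(u + t), v s} with hS
    have hcont : Continuous fun t : ℝ => ∫ s in u..(u + t), v s := by
      exact (intervalIntegral.continuous_primitive hint u).comp (continuous_const.add continuous_id)
    have hclosed : IsClosed S := by
      have : S = {t : ℝ | 0 ≤ t} ∩ {t : ℝ | d ≤ ∫ s in u..(u + t), v s} := rfl
      rw [this]
      exact (isClosed_le continuous_const continuous_id).inter
        (isClosed_le continuous_const hcont)
    have hne : S.Nonempty := by
      refine ⟨d / vmin, div_nonneg hd.le hvmin.le, ?_⟩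
      have h1 : vmin * (u + d / vmin - u) ≤ ∫ s in u..(u + d / vmin), v s :=
        integ_lb v vmin hvmin hlb hint hu
          (le_add_of_nonneg_right (div_nonneg hd.le hvmin.le))
      have : vmin * (u + d / vmin - u) = d := by
        field_simp; ring
      linarith
    have hbdd : BddBelow S := ⟨0, fun t ht => ht.1⟩
    have := hclosed.csInf_mem hne hbdd
    rw [hτ u d]
    exact this
  have hτle : ∀ u t : ℝ, 0 ≤ t → d ≤ (∫ s in u..(u + t), v s) → τ u d ≤ t := by
    intro u t ht hdt
    rw [hτ u d]
    exact csInf_le ⟨0, fun s hs => hs.1⟩ ⟨ht, hdt⟩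
  -- key lemma for ordered pairs
  have key : ∀ u u' : ℝ, 0 ≤ u → u ≤ u' →
      u + τ u d ≤ u' + τ u' d ∧ u' + τ u' d ≤ u + τ u d + M * (u' - u) := by
    intro u u' hu huu
    have hu' : 0 ≤ u' := le_trans hu huu
    obtain ⟨hτ1, hd1⟩ := hτmem u hu
    obtain ⟨hτ2, hd2⟩ := hτmem u' hu'
    have hδ : 0 ≤ u' - u := by linarith
    constructor
    · -- monotonicity: u + τ u d ≤ u' + τ u' d
      have ht : (0:ℝ) ≤ τ u' d + (u' - u) := by linarith
      have hsplit : (∫ s in u..u', v s) + (∫ s in u'..(u' + τ u' d), v s)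
          = ∫ s in u..(u' + τ u' d), v s :=
        intervalIntegral.integral_add_adjacent_intervals (hint _ _) (hint _ _)
      have hpos : 0 ≤ ∫ s in u..u', v s := by
        have := integ_lb v vmin hvmin hlb hint hu huu
        nlinarith
      have hmem : d ≤ ∫ s in u..(u + (τ u' d + (u' - u))), v s := by
        have : u + (τ u' d + (u' - u)) = u' + τ u' d := by ring
        rw [this, ← hsplit]
        linarith
      have := hτle u _ ht hmem
      linarith
    · -- Lipschitz upper bound
      set A := u + τ u d with hA
      have hA0 : 0 ≤ A := by positivity
      have ht : (0:ℝ) ≤ A + M * (u' - u) - u' := by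
        have : A + M * (u' - u) - u' = τ u d + (M - 1) * (u' - u) := by ring
        rw [this]
        have : 0 ≤ (M - 1) * (u' - u) := mul_nonneg (by linarith) hδ
        linarith
      have hsplit1 : (∫ s in u'..A, v s) + (∫ s in A..(A + M * (u' - u)), v s)
          = ∫ s in u'..(A + M * (u' - u)), v s :=
        intervalIntegral.integral_add_adjacent_intervals (hint _ _) (hint _ _)
      have hsplit2 : (∫ s in u..u', v s) + (∫ s in u'..A, v s)
          = ∫ s in u..A, v s :=
        intervalIntegral.integral_add_adjacent_intervals (hint _ _) (hint _ _)
      have hb1 : (∫ s in u..u', v s) ≤ vmax * (u' - u) :=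
        integ_ub v vmax hub hint hu huu
      have hb2 : vmin * (A + M * (u' - u) - A) ≤ ∫ s in A..(A + M * (u' - u)), v s :=
        integ_lb v vmin hvmin hlb hint hA0
          (le_add_of_nonneg_right (mul_nonneg (by linarith) hδ))
      have hMδ : vmin * (A + M * (u' - u) - A) = vmax * (u' - u) := by
        have : A + M * (u' - u) - A = M * (u' - u) := by ring
        rw [this, hM]
        field_simp
      rw [hMδ] at hb2
      have hmem : d ≤ ∫ s in u'..(u' + (A + M * (u' - u) - u')), v s := by
        have heq : u' + (A + M * (u' - u) - u') = A + M * (u' - u) := by ring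
        rw [heq, ← hsplit1]
        linarith
      have := hτle u' _ ht hmem
      linarith
  rcases le_total u₁ u₂ with h | h
  · obtain ⟨h1, h2⟩ := key u₁ u₂ hu₁ h
    rw [ha u₁, ha u₂, abs_of_nonpos (by linarith), abs_of_nonpos (by linarith)]
    linarith
  · obtain ⟨h1, h2⟩ := key u₂ u₁ hu₂ h
    rw [ha u₁, ha u₂, abs_of_nonneg (by linarith), abs_of_nonneg (by linarith)]
    linarith
end
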